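/- Conversely to the strong fern lemma: if for all i, j ∈ {1,…,n} and all multi-indices α^{(1)},…,α^{(p)} ∈ ℤ_{≥0}^n one has Σ_{1 ≤ k_1,…,k_{p-1} ≤ n} ∏_{ℓ=1}^p H_{k_{ℓ-1}, α^{(ℓ)}+e_{k_ℓ}} = 0 (with k_0 = i, k_p = j), then JH is strongly nilpotent with index at most p: JH(X^{(1)})···JH(X^{(p)}) = 0 for all X^{(1)},…,X^{(p)} ∈ k^n. -/

import Mathlib

/-- The Jacobian matrix of the polynomial map `H : k^n → k^n`, evaluated at a point `x ∈ k^n`. -/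
noncomputable def jacEval {k : Type*} [Field k] {n : ℕ}
    (H : Fin n → MvPolynomial (Fin n) k) (x : Fin n → k) : Matrix (Fin n) (Fin n) k :=
  Matrix.of fun i j => MvPolynomial.eval x (MvPolynomial.pderiv j (H i))

/-- The coefficient `H_{i,β}`, i.e. `β!` times the coefficient of `X^β` in `H_i`, so that
`H_i = Σ_β (H_{i,β}/β!) X^β`. -/
noncomputable def coefSc {k : Type*} [Field k] {n : ℕ}
    (H : Fin n → MvPolynomial (Fin n) k) (i : Fin n) (β : Fin n →₀ ℕ) : k :=
  (β.prod fun _ m => (m.factorial : k)) * MvPolynomial.coeff β (H i)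

/-- Entries of a product of a list of matrices as a sum over paths. -/
lemma list_prod_apply_fern {R : Type*} [CommSemiring R] {n : ℕ} :
    ∀ (p : ℕ) (M : Fin p → Matrix (Fin n) (Fin n) R) (i j : Fin n),
      (List.ofFn M).prod i j =
        ∑ κ : Fin (p + 1) → Fin n,
          (if κ 0 = i ∧ κ (Fin.last p) = j then
            ∏ ℓ : Fin p, M ℓ (κ ℓ.castSucc) (κ ℓ.succ)
          else 0) := by
  intro p
  induction p with
  | zero =>
    intro M i j
    simp only [List.ofFn_zero, List.prod_nil]
    rw [show ((1 : Matrix (Fin n) (Fin n) R) i j) = if i = j then 1 else 0 from Matrix.one_apply]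
    rw [← Equiv.sum_comp (Equiv.funUnique (Fin 1) (Fin n)).symm]
    simp only [Equiv.funUnique_symm_apply]
    rcases eq_or_ne i j with h | h
    · subst h
      simp only [Finset.prod_empty, Fin.last, and_self]
      simp [Finset.sum_ite_eq' Finset.univ i (fun _ => (1 : R))]
    · rw [if_neg h]
      symm
      apply Finset.sum_eq_zero
      intro m _
      rw [if_neg]
      rintro ⟨h1, h2⟩
      exact h (h1 ▸ h2 ▸ rfl)
  | succ p ih =>
    intro M i j
    rw [List.ofFn_succ, List.prod_cons, Matrix.mul_apply]
    simp_rw [ih (fun ℓ => M ℓ.succ), Finset.mul_sum]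
    rw [Finset.sum_comm]
    rw [← Equiv.sum_comp (Fin.consEquiv (fun _ : Fin (p + 2) => Fin n))]
    rw [Fintype.sum_prod_type]
    conv_rhs => rw [Finset.sum_comm]
    refine Finset.sum_congr rfl fun κ' _ => ?_
    simp only [Fin.consEquiv_apply, Fin.cons_zero, ← Fin.succ_last, Fin.cons_succ,
      Fin.prod_univ_succ, Fin.castSucc_zero, ← Fin.succ_castSucc]
    simp_rw [ite_and, mul_ite, mul_zero]
    rw [Finset.sum_ite_eq Finset.univ (κ' 0), Finset.sum_ite_eq' Finset.univ i]
    simp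

/-- The coefficient of a partial derivative. -/
lemma coeff_pderiv_fern {k : Type*} [CommSemiring k] {n : ℕ} (b : Fin n)
    (f : MvPolynomial (Fin n) k) (α : Fin n →₀ ℕ) :
    MvPolynomial.coeff α (MvPolynomial.pderiv b f) =
      (α b + 1) * MvPolynomial.coeff (α + Finsupp.single b 1) f := by
  induction f using MvPolynomial.induction_on' with
  | add f g hf hg => simp [map_add, hf, hg, mul_add]
  | monomial s a =>
    rw [MvPolynomial.pderiv_monomial, MvPolynomial.coeff_monomial, MvPolynomial.coeff_monomial]
    by_cases hs : s = α + Finsupp.single b 1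
    · subst hs
      have h1 : α + Finsupp.single b 1 - Finsupp.single b 1 = α := by
        ext u; simp [Finsupp.single_apply]
      have h2 : (α + Finsupp.single b 1 : Fin n →₀ ℕ) b = α b + 1 := by simp
      simp [h1, h2, mul_comm]
    · rw [if_neg hs, mul_zero]
      by_cases hb : s b = 0
      · split
        · push_cast [hb]; ring
        · rfl
      · rw [if_neg]
        intro h
        apply hs
        rw [← h, tsub_add_cancel_of_le]
        rw [Finsupp.single_le_iff]
        omega

/-- Factorial of a multi-index incremented at one spot. -/
lemma fact_add_single_fern {k : Type*} [Field k] {n : ℕ} (α : Fin n →₀ ℕ) (b : Fin n) :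
    ((α + Finsupp.single b 1).prod fun _ m => (m.factorial : k)) =
      (α.prod fun _ m => (m.factorial : k)) * (α b + 1) := by
  rw [Finsupp.prod_fintype _ _ (fun i => by simp), Finsupp.prod_fintype _ _ (fun i => by simp)]
  have key : ∀ i : Fin n, (((α + Finsupp.single b 1 : Fin n →₀ ℕ) i).factorial : k)
      = ((α i).factorial : k) * (if i = b then ((α b : k) + 1) else 1) := by
    intro i
    by_cases h : i = b
    · subst h
      simp only [Finsupp.add_apply, Finsupp.single_eq_same, Nat.factorial_succ, if_pos rfl]
      push_cast
      ring
    · simp [h, Finsupp.single_apply, Ne.symm h]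
  simp_rw [key]
  rw [Finset.prod_mul_distrib, Finset.prod_ite_eq' Finset.univ b (fun _ => (α b : k) + 1)]
  simp

lemma fact_ne_zero_fern {k : Type*} [Field k] [CharZero k] {n : ℕ} (α : Fin n →₀ ℕ) :
    (α.prod fun _ m => (m.factorial : k)) ≠ 0 := by
  rw [Finsupp.prod]
  apply Finset.prod_ne_zero_iff.mpr
  intro i _
  exact_mod_cast (Nat.factorial_ne_zero (α i))

/-- `coeff` of a pderiv in terms of `coefSc`. -/
lemma coeff_pderiv_coefSc {k : Type*} [Field k] [CharZero k] {n : ℕ}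
    (H : Fin n → MvPolynomial (Fin n) k) (a b : Fin n) (α : Fin n →₀ ℕ) :
    MvPolynomial.coeff α (MvPolynomial.pderiv b (H a)) =
      (α.prod fun _ m => (m.factorial : k))⁻¹ * coefSc H a (α + Finsupp.single b 1) := by
  rw [coefSc, fact_add_single_fern, coeff_pderiv_fern]
  field_simp [fact_ne_zero_fern]
  rw [mul_div_cancel_right₀ _ (fact_ne_zero_fern α)]

/-- Converse of the strong fern lemma: if the fern coefficient identities hold for all
`i, j` and all tuples of multi-indices `α⁽¹⁾,…,α⁽ᵖ⁾`, then `JH` is strongly nilpotent with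
index at most `p`. -/
theorem strong_fern_lemma_converse
    {k : Type*} [Field k] [CharZero k] {n : ℕ} (p : ℕ) (hp : 0 < p)
    (H : Fin n → MvPolynomial (Fin n) k)
    (hfern : ∀ (i j : Fin n) (A : Fin p → (Fin n →₀ ℕ)),
      ∑ κ : Fin (p + 1) → Fin n,
        (if κ 0 = i ∧ κ (Fin.last p) = j then
          ∏ ℓ : Fin p, coefSc H (κ ℓ.castSucc) (A ℓ + Finsupp.single (κ ℓ.succ) 1)
        else 0) = 0) :
    ∀ X : Fin p → (Fin n → k),
      (List.ofFn fun ℓ : Fin p => jacEval H (X ℓ)).prod = 0 := by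
  classical
  intro X
  ext i j
  rw [list_prod_apply_fern, Matrix.zero_apply]
  set T : Finset (Fin n →₀ ℕ) :=
    Finset.univ.biUnion (fun a : Fin n => Finset.univ.biUnion fun b : Fin n =>
      (MvPolynomial.pderiv b (H a)).support) with hT
  have hent : ∀ (ℓ : Fin p) (a b : Fin n),
      jacEval H (X ℓ) a b =
        ∑ α ∈ T, MvPolynomial.coeff α (MvPolynomial.pderiv b (H a)) * ∏ u : Fin n, X ℓ u ^ α u := by
    intro ℓ a b
    show MvPolynomial.eval (X ℓ) (MvPolynomial.pderiv b (H a)) = _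
    rw [MvPolynomial.eval_eq']
    refine Finset.sum_subset ?_ ?_
    · intro α hα
      rw [hT]
      simp only [Finset.mem_biUnion, Finset.mem_univ, true_and]
      exact ⟨a, b, hα⟩
    · intro α _ hα
      rw [MvPolynomial.notMem_support_iff.mp hα, zero_mul]
  simp_rw [hent, Finset.prod_univ_sum]
  have hite : ∀ (c : Prop) [Decidable c] (f : (Fin p → (Fin n →₀ ℕ)) → k)
      (s : Finset (Fin p → (Fin n →₀ ℕ))),
      (if c then ∑ A ∈ s, f A else 0) = ∑ A ∈ s, if c then f A else 0 := by
    intro c _ f s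
    split <;> simp
  simp_rw [hite]
  rw [Finset.sum_comm]
  apply Finset.sum_eq_zero
  intro A _
  calc (∑ κ : Fin (p + 1) → Fin n,
        if κ 0 = i ∧ κ (Fin.last p) = j then
          ∏ ℓ : Fin p, MvPolynomial.coeff (A ℓ)
              (MvPolynomial.pderiv (κ ℓ.succ) (H (κ ℓ.castSucc))) * ∏ u, X ℓ u ^ (A ℓ) u
        else 0)
      = ∑ κ : Fin (p + 1) → Fin n,
          (∏ ℓ : Fin p, ((A ℓ).prod fun _ m => (m.factorial : k))⁻¹ * ∏ u, X ℓ u ^ (A ℓ) u) *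
          (if κ 0 = i ∧ κ (Fin.last p) = j then
            ∏ ℓ : Fin p, coefSc H (κ ℓ.castSucc) (A ℓ + Finsupp.single (κ ℓ.succ) 1)
          else 0) := by
        refine Finset.sum_congr rfl fun κ _ => ?_
        split
        · rw [← Finset.prod_mul_distrib]
          refine Finset.prod_congr rfl fun ℓ _ => ?_
          rw [coeff_pderiv_coefSc]
          ring
        · rw [mul_zero]
    _ = 0 := by rw [← Finset.mul_sum, hfern i j A, mul_zero]
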